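/- Let λ > a > 0, c > 0, ĉ > 0, σ > 0, C̄ > 0, C̃ > 0, β ∈ (0,1], u₀ ≥ 0, and let h : (−∞,0] → [0,∞) be continuous such that s ↦ exp(a·s)h(s) and s ↦ exp(λs)(−s)^{β−1}h(s) are integrable on (−∞,0), and such that h has subexponential growth: for every δ > 0, exp(−δt)·h(−t) → 0 as t → ∞. Define γ(t) := c·exp(−λt)·u₀ + σĉ·exp(−λt)·h(−t) + c·C̄/λ + σC̃ ∫_{−t}^{0} exp(λr)(−r)^{β−1} h(r) dr. If u : [0,∞) → [0,∞) is continuous and satisfies u(t) ≤ γ(t) + a ∫₀ᵗ exp(−(λ−a)(t−s)) γ(s) ds for all t ≥ 0, then limsup_{t→∞} u(t) ≤ ρ, where ρ := c·C̄/(λ−a) + a·σĉ ∫_{−∞}^{0} exp(a·s) h(s) ds + (σC̃λ/(λ−a)) ∫_{−∞}^{0} exp(λs)(−s)^{β−1} h(s) ds. -/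

import Mathlib

open MeasureTheory Filter Set

theorem aux_le_Iio (F : ℝ → ℝ) (hFi : IntegrableOn F (Set.Iio 0))
    (hF0 : ∀ r : ℝ, r ≤ 0 → 0 ≤ F r) (t : ℝ) (ht : 0 ≤ t) :
    (∫ r in (-t)..(0:ℝ), F r) ≤ ∫ r in Set.Iio (0:ℝ), F r := by
  rw [intervalIntegral.integral_of_le (by linarith)]
  apply setIntegral_mono_set hFi
  · exact (ae_restrict_iff' measurableSet_Iio).mpr (ae_of_all _ fun x hx => hF0 x hx.le)
  · refine (MeasureTheory.ae_le_set.mpr ?_)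
    refine measure_mono_null (fun z hz => ?_) (measure_singleton (0:ℝ))
    simp only [Set.mem_diff, Set.mem_Ioc, Set.mem_Iio, not_lt] at hz
    exact Set.mem_singleton_iff.mpr (le_antisymm hz.1.2 hz.2)

theorem aux_II (F : ℝ → ℝ) (hFi : IntegrableOn F (Set.Iio 0))
    (x y : ℝ) (hx : x ≤ 0) (hy : y ≤ 0) : IntervalIntegrable F volume x y := by
  have hIic : IntegrableOn F (Set.Iic 0) := by
    rwa [integrableOn_Iic_iff_integrableOn_Iio]
  rw [intervalIntegrable_iff]
  exact hIic.mono_set (fun z hz => hz.2.trans (max_le hx hy))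

set_option maxHeartbeats 1000000 in
theorem stmt8 (lam a c chat σ Cbar Ctil β u₀ : ℝ)
    (hlama : a < lam) (ha : 0 < a) (hc : 0 < c) (hchat : 0 < chat)
    (hσ : 0 < σ) (hCbar : 0 < Cbar) (hCtil : 0 < Ctil)
    (hβ : 0 < β) (hβ1 : β ≤ 1) (hu₀ : 0 ≤ u₀)
    (h : ℝ → ℝ) (hcont : ContinuousOn h (Set.Iic 0))
    (hnonneg : ∀ s : ℝ, s ≤ 0 → 0 ≤ h s)
    (hint1 : IntegrableOn (fun s => Real.exp (a * s) * h s) (Set.Iio 0))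
    (hint2 : IntegrableOn (fun s => Real.exp (lam * s) * (-s) ^ (β - 1) * h s)
      (Set.Iio 0))
    (hsub : ∀ δ : ℝ, 0 < δ →
      Tendsto (fun t : ℝ => Real.exp (-δ * t) * h (-t)) atTop (nhds 0))
    (γ : ℝ → ℝ)
    (hγ : ∀ t : ℝ, γ t =
      c * Real.exp (-lam * t) * u₀ + σ * chat * Real.exp (-lam * t) * h (-t)
      + c * Cbar / lam
      + σ * Ctil * ∫ r in (-t)..(0:ℝ), Real.exp (lam * r) * (-r) ^ (β - 1) * h r)
    (u : ℝ → ℝ) (hu : ContinuousOn u (Set.Ici 0))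
    (hupos : ∀ t : ℝ, 0 ≤ t → 0 ≤ u t)
    (hineq : ∀ t : ℝ, 0 ≤ t →
      u t ≤ γ t + a * ∫ s in (0:ℝ)..t, Real.exp (-(lam - a) * (t - s)) * γ s) :
    limsup u atTop ≤
      c * Cbar / (lam - a)
      + a * σ * chat * (∫ s in Set.Iio (0:ℝ), Real.exp (a * s) * h s)
      + (σ * Ctil * lam / (lam - a)) *
          ∫ s in Set.Iio (0:ℝ), Real.exp (lam * s) * (-s) ^ (β - 1) * h s := by
  have hlam : 0 < lam := ha.trans hlama
  have hcp : 0 < lam - a := sub_pos.mpr hlama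
  obtain ⟨f, hf_def⟩ : ∃ F : ℝ → ℝ, F = fun r => Real.exp (lam * r) * (-r) ^ (β - 1) * h r :=
    ⟨_, rfl⟩
  obtain ⟨g, hg_def⟩ : ∃ G : ℝ → ℝ, G = fun s => Real.exp (a * s) * h s := ⟨_, rfl⟩
  have hint2' : IntegrableOn f (Set.Iio 0) := hf_def ▸ hint2
  have hint1' : IntegrableOn g (Set.Iio 0) := hg_def ▸ hint1
  rw [show (fun r => Real.exp (lam * r) * (-r) ^ (β - 1) * h r) = f from hf_def.symm] at hγ ⊢
  rw [show (fun s => Real.exp (a * s) * h s) = g from hg_def.symm]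
  have hf0 : ∀ r : ℝ, r ≤ 0 → 0 ≤ f r := by
    intro r hr
    rw [hf_def]
    exact mul_nonneg (mul_nonneg (Real.exp_pos _).le (Real.rpow_nonneg (by linarith) _))
      (hnonneg r hr)
  have hg0 : ∀ r : ℝ, r ≤ 0 → 0 ≤ g r := by
    intro r hr
    rw [hg_def]
    exact mul_nonneg (Real.exp_pos _).le (hnonneg r hr)
  obtain ⟨Iinf, hI_def⟩ : ∃ x : ℝ, x = ∫ r in Set.Iio (0:ℝ), f r := ⟨_, rfl⟩
  obtain ⟨Jinf, hJ_def⟩ : ∃ x : ℝ, x = ∫ r in Set.Iio (0:ℝ), g r := ⟨_, rfl⟩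
  rw [← hI_def, ← hJ_def]
  have hIinf0 : 0 ≤ Iinf := by
    rw [hI_def]
    exact setIntegral_nonneg measurableSet_Iio (fun x hx => hf0 x (le_of_lt hx))
  obtain ⟨K, hK_def⟩ : ∃ x : ℝ, x = c * Cbar / lam + σ * Ctil * Iinf := ⟨_, rfl⟩
  have hK0 : 0 ≤ K := by
    have h1 : 0 ≤ σ * Ctil * Iinf := mul_nonneg (by positivity) hIinf0
    have h2 : 0 < c * Cbar / lam := by positivity
    linarith [hK_def.ge, hK_def.le]
  obtain ⟨ρ, hρ_def⟩ : ∃ x : ℝ, x = c * Cbar / (lam - a) + a * σ * chat * Jinf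
      + (σ * Ctil * lam / (lam - a)) * Iinf := ⟨_, rfl⟩
  rw [show c * Cbar / (lam - a) + a * σ * chat * Jinf
      + (σ * Ctil * lam / (lam - a)) * Iinf = ρ from hρ_def.symm]
  -- continuity of s ↦ h (-s) on [0, t]
  have hcontneg : ∀ t : ℝ, 0 ≤ t → ContinuousOn (fun s : ℝ => h (-s)) (Set.uIcc 0 t) := by
    intro t ht
    rw [Set.uIcc_of_le ht]
    exact hcont.comp continuous_neg.continuousOn
      (fun s hs => by simpa using neg_nonpos.mpr hs.1)
  -- monotonicity of the partial integrals of f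
  have hImono : MonotoneOn (fun s : ℝ => ∫ r in (-s)..(0:ℝ), f r) (Set.Ici (0:ℝ)) := by
    intro s₁ hs₁ s₂ hs₂ hs
    simp only [Set.mem_Ici] at hs₁ hs₂
    have h1 : IntervalIntegrable f volume (-s₂) (-s₁) :=
      aux_II f hint2' (-s₂) (-s₁) (by linarith) (by linarith)
    have h2 : IntervalIntegrable f volume (-s₁) 0 :=
      aux_II f hint2' (-s₁) 0 (by linarith) le_rfl
    have hadd := intervalIntegral.integral_add_adjacent_intervals h1 h2
    have hpos : 0 ≤ ∫ r in (-s₂)..(-s₁), f r := by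
      apply intervalIntegral.integral_nonneg (by linarith)
      intro x hx
      simp only [Set.mem_Icc] at hx
      exact hf0 x (by linarith [hx.2])
    dsimp only
    linarith [hadd]
  have hIle : ∀ s : ℝ, 0 ≤ s → (∫ r in (-s)..(0:ℝ), f r) ≤ Iinf := by
    intro s hs
    rw [hI_def]
    exact aux_le_Iio f hint2' hf0 s hs
  -- exponential integral bound
  have hE : ∀ t : ℝ, 0 ≤ t →
      (∫ s in (0:ℝ)..t, Real.exp (-(lam - a) * (t - s))) ≤ 1 / (lam - a) := by
    intro t ht
    have hcongr : ∀ s ∈ Set.uIcc (0:ℝ) t,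
        Real.exp (-(lam - a) * (t - s))
          = Real.exp (-((lam - a) * t)) * Real.exp ((lam - a) * s) := by
      intro s _
      rw [← Real.exp_add]
      ring_nf
    rw [intervalIntegral.integral_congr hcongr, intervalIntegral.integral_const_mul,
      intervalIntegral.integral_comp_mul_left (fun x => Real.exp x) hcp.ne', mul_zero,
      integral_exp, Real.exp_zero, smul_eq_mul]
    have h1 : Real.exp (-((lam - a) * t)) * Real.exp ((lam - a) * t) = 1 := by
      rw [← Real.exp_add]; simp
    have h2 := (Real.exp_pos (-((lam - a) * t))).le
    have h3 : 0 < (lam - a)⁻¹ := inv_pos.mpr hcp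
    rw [one_div]
    nlinarith [Real.exp_pos ((lam - a) * t)]
  -- the key pointwise-in-time bound
  have hkey : ∀ t : ℝ, 0 ≤ t →
      u t ≤ c * Real.exp (-lam * t) * u₀ + σ * chat * (Real.exp (-lam * t) * h (-t))
        + a * (c * u₀) * (t * Real.exp (-(lam - a) * t)) + ρ := by
    intro t ht
    have hecont : Continuous fun s : ℝ => Real.exp (-(lam - a) * (t - s)) := by
      fun_prop
    have hgcont : ContinuousOn (fun s : ℝ => g (-s)) (Set.uIcc 0 t) := by
      rw [hg_def]
      exact (Real.continuous_exp.comp (continuous_const.mul continuous_neg)).continuousOn.mul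
        (hcontneg t ht)
    -- interval integrability of γ on [0, t]
    have hγint : IntervalIntegrable γ volume 0 t := by
      rw [show γ = fun s => c * Real.exp (-lam * s) * u₀ + σ * chat * Real.exp (-lam * s) * h (-s)
          + c * Cbar / lam + σ * Ctil * ∫ r in (-s)..(0:ℝ), f r from funext hγ]
      apply IntervalIntegrable.add
      apply IntervalIntegrable.add
      apply IntervalIntegrable.add
      · exact (Continuous.intervalIntegrable (by fun_prop) 0 t)
      · apply ContinuousOn.intervalIntegrable
        exact (ContinuousOn.mul (by fun_prop) (hcontneg t ht))
      · exact intervalIntegrable_const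
      · apply IntervalIntegrable.const_mul
        apply MonotoneOn.intervalIntegrable
        rw [Set.uIcc_of_le ht]
        exact hImono.mono (fun x hx => hx.1)
    have heγint : IntervalIntegrable (fun s => Real.exp (-(lam - a) * (t - s)) * γ s)
        volume 0 t :=
      hγint.continuousOn_mul hecont.continuousOn
    -- the comparison function B
    have hBint : IntervalIntegrable (fun s : ℝ => c * u₀ * Real.exp (-(lam - a) * t)
        + σ * chat * g (-s) + K * Real.exp (-(lam - a) * (t - s))) volume 0 t := by
      apply IntervalIntegrable.add
      apply IntervalIntegrable.add
      · exact intervalIntegrable_const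
      · exact (continuousOn_const.mul hgcont).intervalIntegrable
      · exact (Continuous.intervalIntegrable (by fun_prop) 0 t)
    -- pointwise comparison
    have hptw : ∀ s ∈ Set.Icc (0:ℝ) t,
        Real.exp (-(lam - a) * (t - s)) * γ s
          ≤ c * u₀ * Real.exp (-(lam - a) * t) + σ * chat * g (-s)
            + K * Real.exp (-(lam - a) * (t - s)) := by
      intro s hs
      obtain ⟨hs0, hst⟩ := hs
      have hh : 0 ≤ h (-s) := hnonneg (-s) (by linarith)
      have hepos := (Real.exp_pos (-(lam - a) * (t - s))).le
      have hexp1 : Real.exp (-(lam - a) * (t - s)) * Real.exp (-lam * s)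
          ≤ Real.exp (-(lam - a) * t) := by
        rw [← Real.exp_add]
        apply Real.exp_le_exp.mpr
        nlinarith [mul_nonneg ha.le hs0]
      have hexp2 : Real.exp (-(lam - a) * (t - s)) * Real.exp (-lam * s)
          ≤ Real.exp (a * -s) := by
        rw [← Real.exp_add]
        apply Real.exp_le_exp.mpr
        nlinarith [mul_nonneg hcp.le ht]
      have hIs : (∫ r in (-s)..(0:ℝ), f r) ≤ Iinf := hIle s hs0
      calc Real.exp (-(lam - a) * (t - s)) * γ s
          = c * u₀ * (Real.exp (-(lam - a) * (t - s)) * Real.exp (-lam * s))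
            + σ * chat * (Real.exp (-(lam - a) * (t - s)) * Real.exp (-lam * s)) * h (-s)
            + (c * Cbar / lam) * Real.exp (-(lam - a) * (t - s))
            + σ * Ctil * (∫ r in (-s)..(0:ℝ), f r) * Real.exp (-(lam - a) * (t - s)) := by
            rw [hγ s]; ring
        _ ≤ c * u₀ * Real.exp (-(lam - a) * t)
            + σ * chat * Real.exp (a * -s) * h (-s)
            + (c * Cbar / lam) * Real.exp (-(lam - a) * (t - s))
            + σ * Ctil * Iinf * Real.exp (-(lam - a) * (t - s)) := by
            gcongr
        _ = c * u₀ * Real.exp (-(lam - a) * t) + σ * chat * g (-s)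
            + K * Real.exp (-(lam - a) * (t - s)) := by
            rw [hg_def, hK_def]; ring
    -- integral comparison and computation
    have hmono := intervalIntegral.integral_mono_on ht heγint hBint hptw
    have hsplit : (∫ s in (0:ℝ)..t, (c * u₀ * Real.exp (-(lam - a) * t)
          + σ * chat * g (-s) + K * Real.exp (-(lam - a) * (t - s))))
        = (∫ s in (0:ℝ)..t, c * u₀ * Real.exp (-(lam - a) * t))
          + (∫ s in (0:ℝ)..t, σ * chat * g (-s))
          + (∫ s in (0:ℝ)..t, K * Real.exp (-(lam - a) * (t - s))) := by
      rw [intervalIntegral.integral_add (intervalIntegrable_const.add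
          (show IntervalIntegrable (fun s => σ * chat * g (-s)) volume 0 t from
            (continuousOn_const.mul hgcont).intervalIntegrable))
          (Continuous.intervalIntegrable (by fun_prop) 0 t),
        intervalIntegral.integral_add intervalIntegrable_const
          (show IntervalIntegrable (fun s => σ * chat * g (-s)) volume 0 t from
            (continuousOn_const.mul hgcont).intervalIntegrable)]
    have hb1 : (∫ _ in (0:ℝ)..t, c * u₀ * Real.exp (-(lam - a) * t))
        = t * (c * u₀ * Real.exp (-(lam - a) * t)) := by
      rw [intervalIntegral.integral_const, smul_eq_mul, sub_zero]
    have hb2 : (∫ s in (0:ℝ)..t, σ * chat * g (-s)) ≤ σ * chat * Jinf := by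
      rw [intervalIntegral.integral_const_mul]
      have hcomp : (∫ s in (0:ℝ)..t, g (-s)) = ∫ r in (-t)..(0:ℝ), g r := by
        rw [intervalIntegral.integral_comp_neg g, neg_zero]
      rw [hcomp]
      have hJle : (∫ r in (-t)..(0:ℝ), g r) ≤ Jinf := by
        rw [hJ_def]
        exact aux_le_Iio g hint1' hg0 t ht
      exact mul_le_mul_of_nonneg_left hJle (by positivity)
    have hb3 : (∫ s in (0:ℝ)..t, K * Real.exp (-(lam - a) * (t - s)))
        ≤ K * (1 / (lam - a)) := by
      rw [intervalIntegral.integral_const_mul]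
      exact mul_le_mul_of_nonneg_left (hE t ht) hK0
    -- bound on γ t itself
    have hγt : γ t ≤ c * Real.exp (-lam * t) * u₀
        + σ * chat * (Real.exp (-lam * t) * h (-t)) + K := by
      rw [hγ t, hK_def]
      have hIt : σ * Ctil * (∫ r in (-t)..(0:ℝ), f r) ≤ σ * Ctil * Iinf :=
        mul_le_mul_of_nonneg_left (hIle t ht) (by positivity)
      have : σ * chat * Real.exp (-lam * t) * h (-t)
          = σ * chat * (Real.exp (-lam * t) * h (-t)) := by ring
      linarith [hIt]
    -- final assembly
    have halg : K + a * (K * (1 / (lam - a))) + a * (σ * chat * Jinf) = ρ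
        - a * σ * chat * Jinf + a * (σ * chat * Jinf) := by
      rw [hK_def, hρ_def]
      field_simp
      ring
    have hint_le : a * (∫ s in (0:ℝ)..t, Real.exp (-(lam - a) * (t - s)) * γ s)
        ≤ a * (t * (c * u₀ * Real.exp (-(lam - a) * t)) + σ * chat * Jinf
            + K * (1 / (lam - a))) := by
      apply mul_le_mul_of_nonneg_left _ ha.le
      calc (∫ s in (0:ℝ)..t, Real.exp (-(lam - a) * (t - s)) * γ s)
          ≤ _ := hmono
        _ ≤ _ := by rw [hsplit, hb1]; linarith [hb2, hb3]
    have hu_t := hineq t ht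
    have hexpand : a * (t * (c * u₀ * Real.exp (-(lam - a) * t)) + σ * chat * Jinf
        + K * (1 / (lam - a)))
        = a * (c * u₀) * (t * Real.exp (-(lam - a) * t)) + a * (σ * chat * Jinf)
          + a * (K * (1 / (lam - a))) := by ring
    nlinarith [hγt, hint_le, hu_t, halg, hexpand]
  -- conclude with the limsup
  have T1 : Tendsto (fun t : ℝ => c * Real.exp (-lam * t) * u₀) atTop (nhds 0) := by
    have base : Tendsto (fun t : ℝ => Real.exp (-(lam * t))) atTop (nhds 0) :=
      Real.tendsto_exp_neg_atTop_nhds_zero.comp (Tendsto.const_mul_atTop hlam tendsto_id)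
    have base' : Tendsto (fun t : ℝ => Real.exp (-lam * t)) atTop (nhds 0) := by
      simpa [neg_mul] using base
    simpa using (base'.const_mul c).mul_const u₀
  have T2 : Tendsto (fun t : ℝ => σ * chat * (Real.exp (-lam * t) * h (-t))) atTop (nhds 0) := by
    simpa using (hsub lam hlam).const_mul (σ * chat)
  have T3 : Tendsto (fun t : ℝ => a * (c * u₀) * (t * Real.exp (-(lam - a) * t)))
      atTop (nhds 0) := by
    have base : Tendsto (fun x : ℝ => x * Real.exp (-x)) atTop (nhds 0) := by
      simpa using Real.tendsto_pow_mul_exp_neg_atTop_nhds_zero 1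
    have base2 : Tendsto (fun t : ℝ => ((lam - a) * t) * Real.exp (-((lam - a) * t)))
        atTop (nhds 0) := base.comp (Tendsto.const_mul_atTop hcp tendsto_id)
    have base3 : Tendsto (fun t : ℝ => t * Real.exp (-(lam - a) * t)) atTop (nhds 0) := by
      have := base2.const_mul ((lam - a)⁻¹)
      rw [mul_zero] at this
      apply this.congr
      intro t
      field_simp
    simpa using base3.const_mul (a * (c * u₀))
  have hΦ : Tendsto (fun t : ℝ => c * Real.exp (-lam * t) * u₀
      + σ * chat * (Real.exp (-lam * t) * h (-t))
      + a * (c * u₀) * (t * Real.exp (-(lam - a) * t)) + ρ) atTop (nhds ρ) := by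
    have := ((T1.add T2).add T3).add (tendsto_const_nhds (α := ℝ) (x := ρ))
    simpa using this
  have hle : u ≤ᶠ[atTop] fun t : ℝ => c * Real.exp (-lam * t) * u₀
      + σ * chat * (Real.exp (-lam * t) * h (-t))
      + a * (c * u₀) * (t * Real.exp (-(lam - a) * t)) + ρ :=
    (eventually_ge_atTop (0:ℝ)).mono fun t ht => hkey t ht
  have hcb : IsCoboundedUnder (· ≤ ·) atTop u :=
    isCoboundedUnder_le_of_eventually_le atTop
      ((eventually_ge_atTop (0:ℝ)).mono fun t ht => hupos t ht)
  calc limsup u atTop ≤ limsup (fun t : ℝ => c * Real.exp (-lam * t) * u₀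
      + σ * chat * (Real.exp (-lam * t) * h (-t))
      + a * (c * u₀) * (t * Real.exp (-(lam - a) * t)) + ρ) atTop :=
      limsup_le_limsup hle hcb hΦ.isBoundedUnder_le
    _ = ρ := hΦ.limsup_eq
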